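/- Fix integers K, L ≥ 1, ρ ∈ ℝ, θ_A, θ_B ∈ ℝ with θ := θ_A + θ_B, and probability vectors P^A ∈ ℝ^K and P^B ∈ ℝ^L. Let x : [0,∞) → ℝ^{K×L} be differentiable with x(0) having nonnegative entries summing to 1, solving dx_{ij}/dt = ρ(x_{i·}x_{·j} − x_{ij}) + (θ_A/2)(x_{·j} P^A_i − x_{ij}) + (θ_B/2)(x_{i·} P^B_j − x_{ij}) for all t ≥ 0 and all i,j, where x_{i·} = ∑_{j} x_{ij} and x_{·j} = ∑_{i} x_{ij}. Then for all t ≥ 0 and all i,j: x_{ij}(t) = (1 − e^{−(ρ+θ/2)t}) P^A_i P^B_j + (x_{·j}(0) − P^B_j) P^A_i (e^{−(θ_B/2)t} − e^{−(ρ+θ/2)t}) + (x_{i·}(0) − P^A_i) P^B_j (e^{−(θ_A/2)t} − e^{−(ρ+θ/2)t}) + (x_{i·}(0) − P^A_i)(x_{·j}(0) − P^B_j)(e^{−(θ/2)t} − e^{−(ρ+θ/2)t}) + x_{ij}(0) e^{−(ρ+θ/2)t}. -/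

import Mathlib

open Set Finset

private lemma expAux (k s : ℝ) :
    HasDerivAt (fun u : ℝ => Real.exp (k * u)) (k * Real.exp (k * s)) s := by
  have h := ((hasDerivAt_id' s).const_mul k).exp
  simp only [mul_one] at h
  rw [mul_comm (Real.exp (k * s)) k] at h
  exact h


private lemma sum_lin {n : ℕ} (c1 c2 c3 : ℝ) (u v w : Fin n → ℝ) :
    ∑ k, (c1 * u k + c2 * v k - c3 * w k)
      = c1 * (∑ k, u k) + c2 * (∑ k, v k) - c3 * (∑ k, w k) := by
  rw [Finset.mul_sum, Finset.mul_sum, Finset.mul_sum, ← Finset.sum_add_distrib,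
    ← Finset.sum_sub_distrib]

/-- If `f' = -c f` for `t ≥ 0` and `f 0 = 0` then `f ≡ 0` on `[0,∞)`. -/
private lemma decay_unique (c : ℝ) (f : ℝ → ℝ)
    (hf : ∀ t, 0 ≤ t → HasDerivAt f (-c * f t) t) (h0 : f 0 = 0) :
    ∀ t, 0 ≤ t → f t = 0 := by
  intro T hT
  have key : ∀ s ∈ Icc (0:ℝ) T, f s * Real.exp (c * s) = f 0 * Real.exp (c * 0) := by
    apply constant_of_has_deriv_right_zero
    · intro s hs
      exact (((hf s hs.1).mul (expAux c s)).continuousAt).continuousWithinAt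
    · intro s hs
      have h := (hf s hs.1).mul (expAux c s)
      have heq : (-c * f s) * Real.exp (c * s) + f s * (c * Real.exp (c * s)) = 0 := by ring
      rw [heq] at h
      exact h.hasDerivWithinAt
  have hT' := key T ⟨hT, le_refl T⟩
  rw [h0, zero_mul] at hT'
  rcases mul_eq_zero.mp hT' with h | h
  · exact h
  · exact absurd h (Real.exp_ne_zero _)

/-- Solution of the linear relaxation ODE `f' = c (p - f)` on `[0,∞)`. -/
private lemma linear_relax (c p : ℝ) (f : ℝ → ℝ)
    (hf : ∀ t, 0 ≤ t → HasDerivAt f (c * (p - f t)) t) :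
    ∀ t, 0 ≤ t → f t = p + (f 0 - p) * Real.exp (-c * t) := by
  have h := decay_unique c (fun t => f t - (p + (f 0 - p) * Real.exp (-c * t))) ?_ ?_
  · intro t ht
    have := h t ht
    linarith [this]
  · intro t ht
    have hg : HasDerivAt (fun t => p + (f 0 - p) * Real.exp (-c * t))
        ((f 0 - p) * (-c * Real.exp (-c * t))) t := by
      simpa using (hasDerivAt_const t p).fun_add (((expAux (-c) t)).const_mul (f 0 - p))
    have h2 := (hf t ht).sub hg
    have heq : c * (p - f t) - (f 0 - p) * (-c * Real.exp (-c * t))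
        = -c * (f t - (p + (f 0 - p) * Real.exp (-c * t))) := by ring
    rw [heq] at h2
    exact h2
  · simp

theorem mutation_recombination_solution (K L : ℕ) (hK : 1 ≤ K) (hL : 1 ≤ L)
    (ρ θA θB : ℝ)
    (PA : Fin K → ℝ) (hPA : ∀ i, 0 ≤ PA i) (hPAsum : ∑ i, PA i = 1)
    (PB : Fin L → ℝ) (hPB : ∀ j, 0 ≤ PB j) (hPBsum : ∑ j, PB j = 1)
    (x : ℝ → Fin K → Fin L → ℝ)
    (hx0 : ∀ i j, 0 ≤ x 0 i j) (hsum0 : ∑ i, ∑ j, x 0 i j = 1)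
    (hode : ∀ t, 0 ≤ t → ∀ i j, HasDerivAt (fun s => x s i j)
      (ρ * ((∑ j', x t i j') * (∑ i', x t i' j) - x t i j)
        + θA / 2 * ((∑ i', x t i' j) * PA i - x t i j)
        + θB / 2 * ((∑ j', x t i j') * PB j - x t i j)) t) :
    ∀ t, 0 ≤ t → ∀ i j,
      x t i j =
        (1 - Real.exp (-(ρ + (θA + θB) / 2) * t)) * (PA i * PB j)
        + ((∑ i', x 0 i' j) - PB j) * PA i *
            (Real.exp (-(θB / 2) * t) - Real.exp (-(ρ + (θA + θB) / 2) * t))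
        + ((∑ j', x 0 i j') - PA i) * PB j *
            (Real.exp (-(θA / 2) * t) - Real.exp (-(ρ + (θA + θB) / 2) * t))
        + ((∑ j', x 0 i j') - PA i) * ((∑ i', x 0 i' j) - PB j) *
            (Real.exp (-((θA + θB) / 2) * t) - Real.exp (-(ρ + (θA + θB) / 2) * t))
        + x 0 i j * Real.exp (-(ρ + (θA + θB) / 2) * t) := by
  classical
  -- derivative of the total mass
  have hSderiv : ∀ s, 0 ≤ s → HasDerivAt (fun u => ∑ i, ∑ j, x u i j)
      (ρ * ((∑ i, ∑ j, x s i j) * (∑ i, ∑ j, x s i j) - (∑ i, ∑ j, x s i j))) s := by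
    intro s hs
    have h := HasDerivAt.fun_sum (fun i (_ : i ∈ Finset.univ) =>
      HasDerivAt.fun_sum (fun j (_ : j ∈ Finset.univ) => hode s hs i j))
    have hcomm : ∑ j : Fin L, ∑ i' : Fin K, x s i' j = ∑ i, ∑ j, x s i j :=
      Finset.sum_comm
    have innerS : ∀ i : Fin K, (∑ j, (ρ * ((∑ j', x s i j') * (∑ i', x s i' j) - x s i j)
        + θA / 2 * ((∑ i', x s i' j) * PA i - x s i j)
        + θB / 2 * ((∑ j', x s i j') * PB j - x s i j)))
        = (ρ * (∑ i, ∑ j, x s i j) + θB / 2) * (∑ j', x s i j')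
          + (θA / 2 * (∑ i, ∑ j, x s i j)) * PA i
          - (ρ + θA / 2 + θB / 2) * (∑ j', x s i j') := by
      intro i
      calc (∑ j, (ρ * ((∑ j', x s i j') * (∑ i', x s i' j) - x s i j)
            + θA / 2 * ((∑ i', x s i' j) * PA i - x s i j)
            + θB / 2 * ((∑ j', x s i j') * PB j - x s i j)))
          = ∑ j, ((ρ * (∑ j', x s i j') + θA / 2 * PA i) * (∑ i', x s i' j)
              + (θB / 2 * (∑ j', x s i j')) * PB j
              - (ρ + θA / 2 + θB / 2) * x s i j) :=
            Finset.sum_congr rfl fun j _ => by ring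
        _ = (ρ * (∑ j', x s i j') + θA / 2 * PA i) * (∑ j, ∑ i', x s i' j)
              + (θB / 2 * (∑ j', x s i j')) * (∑ j, PB j)
              - (ρ + θA / 2 + θB / 2) * (∑ j, x s i j) :=
            sum_lin _ _ _ _ _ _
        _ = (ρ * (∑ i, ∑ j, x s i j) + θB / 2) * (∑ j', x s i j')
              + (θA / 2 * (∑ i, ∑ j, x s i j)) * PA i
              - (ρ + θA / 2 + θB / 2) * (∑ j', x s i j') := by
            rw [hcomm, hPBsum]; ring
    have heq : (∑ i, ∑ j, (ρ * ((∑ j', x s i j') * (∑ i', x s i' j) - x s i j)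
        + θA / 2 * ((∑ i', x s i' j) * PA i - x s i j)
        + θB / 2 * ((∑ j', x s i j') * PB j - x s i j)))
        = ρ * ((∑ i, ∑ j, x s i j) * (∑ i, ∑ j, x s i j) - (∑ i, ∑ j, x s i j)) := by
      calc (∑ i, ∑ j, (ρ * ((∑ j', x s i j') * (∑ i', x s i' j) - x s i j)
            + θA / 2 * ((∑ i', x s i' j) * PA i - x s i j)
            + θB / 2 * ((∑ j', x s i j') * PB j - x s i j)))
          = ∑ i, ((ρ * (∑ i, ∑ j, x s i j) + θB / 2) * (∑ j', x s i j')
              + (θA / 2 * (∑ i, ∑ j, x s i j)) * PA i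
              - (ρ + θA / 2 + θB / 2) * (∑ j', x s i j')) :=
            Finset.sum_congr rfl fun i _ => innerS i
        _ = (ρ * (∑ i, ∑ j, x s i j) + θB / 2) * (∑ i, ∑ j', x s i j')
              + (θA / 2 * (∑ i, ∑ j, x s i j)) * (∑ i, PA i)
              - (ρ + θA / 2 + θB / 2) * (∑ i, ∑ j', x s i j') :=
            sum_lin _ _ _ _ _ _
        _ = ρ * ((∑ i, ∑ j, x s i j) * (∑ i, ∑ j, x s i j) - (∑ i, ∑ j, x s i j)) := by
            rw [hPAsum]; ring
    rw [← heq]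
    exact h
  -- total mass is 1 (Grönwall)
  have hS1 : ∀ s, 0 ≤ s → (∑ i, ∑ j, x s i j) = 1 := by
    intro T hT
    have hcont : ContinuousOn (fun u => ∑ i, ∑ j, x u i j) (Icc 0 T) := fun s hs =>
      ((hSderiv s hs.1).continuousAt).continuousWithinAt
    obtain ⟨C, hC⟩ :=
      (isCompact_Icc : IsCompact (Icc (0:ℝ) T)).exists_bound_of_continuousOn hcont
    have hg : ∀ s ∈ Icc (0:ℝ) T, ‖(∑ i, ∑ j, x s i j) - 1‖
        ≤ gronwallBound 0 (|ρ| * C) 0 (s - 0) := by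
      apply norm_le_gronwallBound_of_norm_deriv_right_le
        (f' := fun s => ρ * ((∑ i, ∑ j, x s i j) * (∑ i, ∑ j, x s i j) - (∑ i, ∑ j, x s i j)))
      · exact hcont.sub continuousOn_const
      · intro s hs
        exact ((hSderiv s hs.1).sub_const 1).hasDerivWithinAt
      · simp [hsum0]
      · intro s hs
        have hCs := hC s ⟨hs.1, le_of_lt hs.2⟩
        rw [Real.norm_eq_abs] at hCs ⊢
        have heq : ρ * ((∑ i, ∑ j, x s i j) * (∑ i, ∑ j, x s i j) - (∑ i, ∑ j, x s i j))
            = ρ * (∑ i, ∑ j, x s i j) * ((∑ i, ∑ j, x s i j) - 1) := by ring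
        rw [heq, abs_mul, abs_mul, Real.norm_eq_abs]
        have h1 : |ρ| * |∑ i, ∑ j, x s i j| ≤ |ρ| * C :=
          mul_le_mul_of_nonneg_left hCs (abs_nonneg ρ)
        nlinarith [abs_nonneg ((∑ i, ∑ j, x s i j) - 1)]
    have hgT := hg T ⟨hT, le_refl T⟩
    rw [gronwallBound_ε0_δ0] at hgT
    have h0 : (∑ i, ∑ j, x T i j) - 1 = 0 :=
      norm_eq_zero.mp (le_antisymm hgT (norm_nonneg _))
    linarith
  intro t ht i j
  -- row marginal ODE
  have hrowderiv : ∀ s, 0 ≤ s → HasDerivAt (fun u => ∑ j', x u i j')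
      (θA / 2 * (PA i - ∑ j', x s i j')) s := by
    intro s hs
    have h := HasDerivAt.fun_sum (fun j' (_ : j' ∈ Finset.univ) => hode s hs i j')
    have hcomm : ∑ j : Fin L, ∑ i' : Fin K, x s i' j = ∑ i', ∑ j', x s i' j' :=
      Finset.sum_comm
    have heq : (∑ j, (ρ * ((∑ j', x s i j') * (∑ i', x s i' j) - x s i j)
        + θA / 2 * ((∑ i', x s i' j) * PA i - x s i j)
        + θB / 2 * ((∑ j', x s i j') * PB j - x s i j)))
        = θA / 2 * (PA i - ∑ j', x s i j') := by
      calc (∑ j, (ρ * ((∑ j', x s i j') * (∑ i', x s i' j) - x s i j)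
            + θA / 2 * ((∑ i', x s i' j) * PA i - x s i j)
            + θB / 2 * ((∑ j', x s i j') * PB j - x s i j)))
          = ∑ j, ((ρ * (∑ j', x s i j') + θA / 2 * PA i) * (∑ i', x s i' j)
              + (θB / 2 * (∑ j', x s i j')) * PB j
              - (ρ + θA / 2 + θB / 2) * x s i j) :=
            Finset.sum_congr rfl fun j _ => by ring
        _ = (ρ * (∑ j', x s i j') + θA / 2 * PA i) * (∑ j, ∑ i', x s i' j)
              + (θB / 2 * (∑ j', x s i j')) * (∑ j, PB j)
              - (ρ + θA / 2 + θB / 2) * (∑ j, x s i j) :=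
            sum_lin _ _ _ _ _ _
        _ = θA / 2 * (PA i - ∑ j', x s i j') := by
            rw [hcomm, hS1 s hs, hPBsum]; ring
    rw [← heq]
    exact h
  -- column marginal ODE
  have hcolderiv : ∀ s, 0 ≤ s → HasDerivAt (fun u => ∑ i', x u i' j)
      (θB / 2 * (PB j - ∑ i', x s i' j)) s := by
    intro s hs
    have h := HasDerivAt.fun_sum (fun i' (_ : i' ∈ Finset.univ) => hode s hs i' j)
    have heq : (∑ i', (ρ * ((∑ j', x s i' j') * (∑ i'', x s i'' j) - x s i' j)
        + θA / 2 * ((∑ i'', x s i'' j) * PA i' - x s i' j)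
        + θB / 2 * ((∑ j', x s i' j') * PB j - x s i' j)))
        = θB / 2 * (PB j - ∑ i', x s i' j) := by
      calc (∑ i', (ρ * ((∑ j', x s i' j') * (∑ i'', x s i'' j) - x s i' j)
            + θA / 2 * ((∑ i'', x s i'' j) * PA i' - x s i' j)
            + θB / 2 * ((∑ j', x s i' j') * PB j - x s i' j)))
          = ∑ i', ((ρ * (∑ i'', x s i'' j) + θB / 2 * PB j) * (∑ j', x s i' j')
              + (θA / 2 * (∑ i'', x s i'' j)) * PA i'
              - (ρ + θA / 2 + θB / 2) * x s i' j) :=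
            Finset.sum_congr rfl fun i' _ => by ring
        _ = (ρ * (∑ i'', x s i'' j) + θB / 2 * PB j) * (∑ i', ∑ j', x s i' j')
              + (θA / 2 * (∑ i'', x s i'' j)) * (∑ i', PA i')
              - (ρ + θA / 2 + θB / 2) * (∑ i', x s i' j) :=
            sum_lin _ _ _ _ _ _
        _ = θB / 2 * (PB j - ∑ i', x s i' j) := by
            rw [hS1 s hs, hPAsum]; ring
    rw [← heq]
    exact h
  -- explicit marginals
  have hrow : ∀ s, 0 ≤ s → (∑ j', x s i j')
      = PA i + ((∑ j', x 0 i j') - PA i) * Real.exp (-(θA / 2) * s) :=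
    linear_relax (θA / 2) (PA i) _ hrowderiv
  have hcol : ∀ s, 0 ≤ s → (∑ i', x s i' j)
      = PB j + ((∑ i', x 0 i' j) - PB j) * Real.exp (-(θB / 2) * s) :=
    linear_relax (θB / 2) (PB j) _ hcolderiv
  set A : ℝ := (∑ j', x 0 i j') - PA i with hA
  set B : ℝ := (∑ i', x 0 i' j) - PB j with hB
  set c : ℝ := ρ + (θA + θB) / 2 with hc
  set Ψ : ℝ → ℝ := fun s => PA i * PB j + B * PA i * Real.exp (-(θB / 2) * s)
      + A * PB j * Real.exp (-(θA / 2) * s) + A * B * Real.exp (-((θA + θB) / 2) * s)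
      + (x 0 i j - PA i * PB j - B * PA i - A * PB j - A * B) * Real.exp (-c * s) with hΨ
  have hΨderiv : ∀ s : ℝ, HasDerivAt Ψ
      (B * PA i * (-(θB / 2) * Real.exp (-(θB / 2) * s))
        + A * PB j * (-(θA / 2) * Real.exp (-(θA / 2) * s))
        + A * B * (-((θA + θB) / 2) * Real.exp (-((θA + θB) / 2) * s))
        + (x 0 i j - PA i * PB j - B * PA i - A * PB j - A * B)
            * (-c * Real.exp (-c * s))) s := by
    intro s
    rw [hΨ]
    refine (((((hasDerivAt_const s (PA i * PB j)).fun_add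
      ((expAux (-(θB / 2)) s).const_mul (B * PA i))).fun_add
      ((expAux (-(θA / 2)) s).const_mul (A * PB j))).fun_add
      ((expAux (-((θA + θB) / 2)) s).const_mul (A * B))).fun_add
      ((expAux (-c) s).const_mul (x 0 i j - PA i * PB j - B * PA i - A * PB j - A * B))).congr_deriv ?_
    ring
  have hzero : ∀ s, 0 ≤ s → x s i j - Ψ s = 0 := by
    apply decay_unique c
    · intro s hs
      have h := (hode s hs i j).sub (hΨderiv s)
      have eAB : Real.exp (-((θA + θB) / 2) * s)
          = Real.exp (-(θA / 2) * s) * Real.exp (-(θB / 2) * s) := by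
        rw [← Real.exp_add]; congr 1; ring
      have eC : Real.exp (-c * s)
          = Real.exp (-(θA / 2) * s) * Real.exp (-(θB / 2) * s) * Real.exp (-ρ * s) := by
        rw [← Real.exp_add, ← Real.exp_add]; congr 1; rw [hc]; ring
      have key : (ρ * ((∑ j', x s i j') * (∑ i', x s i' j) - x s i j)
          + θA / 2 * ((∑ i', x s i' j) * PA i - x s i j)
          + θB / 2 * ((∑ j', x s i j') * PB j - x s i j))
          - (B * PA i * (-(θB / 2) * Real.exp (-(θB / 2) * s))
            + A * PB j * (-(θA / 2) * Real.exp (-(θA / 2) * s))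
            + A * B * (-((θA + θB) / 2) * Real.exp (-((θA + θB) / 2) * s))
            + (x 0 i j - PA i * PB j - B * PA i - A * PB j - A * B)
                * (-c * Real.exp (-c * s)))
          = -c * (x s i j - Ψ s) := by
        rw [hrow s hs, hcol s hs, hΨ]
        simp only
        rw [eAB, eC, hc]
        ring
      rw [key] at h
      exact h
    · rw [hΨ]; simp only [mul_zero, neg_zero, zero_mul, Real.exp_zero]; ring
  have hfin := hzero t ht
  have hx : x t i j = Ψ t := by linarith
  rw [hx, hΨ]
  simp only
  ring
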